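/- Fix m ≥ 1, h ≥ 2, δ > 0 and an integer k ≥ 1, and let ξ ∈ Ξ. In any configuration on the slab 𝕊_h, if the event E_m^{2^j m}(ξ) occurs for every j ≥ 0, then ξ is seen from some vertex of ∂Λ_{m+1} within 𝕊_h, i.e. there is an infinite self-avoiding path in 𝕊_h starting at a vertex of ∂Λ_{m+1} along which ξ is read. -/

import Mathlib

open MeasureTheory Set

namespace PercWords

/-- Vertices of the hypercubic lattice `ℤ^d`. -/
abbrev Vtx (d : ℕ) := Fin d → ℤ

/-- Site percolation configurations on `ℤ^d` (`true` = state 1, `false` = state 0). -/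
abbrev Config (d : ℕ) := Vtx d → Bool

/-- `u ∼ v` : the Euclidean distance between `u` and `v` is `1`. -/
def adj {d : ℕ} (u v : Vtx d) : Prop := (∑ i, (u i - v i) ^ 2) = 1

/-- `μ` is Bernoulli site percolation with parameter `p` on the index set `ι`:
a probability measure under which, independently, each site has state `true`
with probability `p` and state `false` with probability `1 - p`. -/
def IsBernoulliFam {ι : Type} (p : ℝ) (μ : Measure (ι → Bool)) : Prop :=
  IsProbabilityMeasure μ ∧
    ∀ (s : Finset ι) (f : ι → Bool),
      μ {ω | ∀ v ∈ s, ω v = f v} =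
        ∏ v ∈ s, ENNReal.ofReal (if f v then p else 1 - p)

/-- The word `ξ` is seen from `v` along an infinite self-avoiding path all of whose
vertices lie in `A`. -/
def seesWordIn {d : ℕ} (ω : Config d) (ξ : ℕ → Bool) (A : Set (Vtx d)) (v : Vtx d) : Prop :=
  ∃ γ : ℕ → Vtx d, γ 0 = v ∧ Function.Injective γ ∧
    (∀ i, adj (γ i) (γ (i + 1))) ∧ (∀ i, γ i ∈ A) ∧ (∀ i, ω (γ i) = ξ i)

/-- The word `ξ` is seen from `v` in the configuration `ω`. -/
def seesWord {d : ℕ} (ω : Config d) (ξ : ℕ → Bool) (v : Vtx d) : Prop :=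
  seesWordIn ω ξ Set.univ v

/-- The slab `𝕊_h = ℤ² × (0, hk] × (−k, k]^{d−3}` inside `ℤ^d`. -/
def slabS (d k h : ℕ) : Set (Vtx d) :=
  {x | ∀ i : Fin d,
    ((i : ℕ) = 2 → 0 < x i ∧ x i ≤ (h : ℤ) * (k : ℤ)) ∧
    (3 ≤ (i : ℕ) → -(k : ℤ) < x i ∧ x i ≤ (k : ℤ))}

/-- The box `Λ_n = [−kn, kn]² × (0, hk] × (−k, k]^{d−3}`. -/
def lamBox (d k h n : ℕ) : Set (Vtx d) :=
  {x | x ∈ slabS d k h ∧ ∀ i : Fin d, (i : ℕ) ≤ 1 → |x i| ≤ (k : ℤ) * (n : ℤ)}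

/-- The inner vertex boundary `∂Λ_n` of `Λ_n` with respect to the slab `𝕊_h`. -/
def lamBdry (d k h n : ℕ) : Set (Vtx d) :=
  {x | x ∈ lamBox d k h n ∧ ∃ y, adj x y ∧ y ∈ slabS d k h ∧ y ∉ lamBox d k h n}

/-- `x ⇒^{ξ_{[a,b]}} y` inside `A` : there is a self-avoiding path
`x = v₀ ∼ ⋯ ∼ v_{b−a} = y` contained in `A` with `ω (v i) = ξ (a + i)` for all
`0 ≤ i ≤ b − a` (i.e. the finite word `ξ_{[a,b]}` is read along the path). -/
def wordConnIn {d : ℕ} (ω : Config d) (ξ : ℕ → Bool) (a b : ℕ) (A : Set (Vtx d))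
    (x y : Vtx d) : Prop :=
  a ≤ b ∧ ∃ γ : ℕ → Vtx d, γ 0 = x ∧ γ (b - a) = y ∧
    (∀ i < b - a, adj (γ i) (γ (i + 1))) ∧
    (∀ i ≤ b - a, ∀ j ≤ b - a, γ i = γ j → i = j) ∧
    (∀ i ≤ b - a, γ i ∈ A) ∧ (∀ i ≤ b - a, ω (γ i) = ξ (a + i))

/-- The event `E_m^n(ξ)` : for `n = m` it is the sure event; for `n ≠ m` it asks for a
set `T ⊆ ∂Λ_n` with `|T| ≥ 8δ|∂Λ_n|` such that every `y ∈ T` is reached from some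
`x ∈ ∂Λ_{m+1}` by reading an initial segment `ξ_{[0,t]}`, `t ≤ (2k+1)^d n`, of the word
`ξ` along a self-avoiding path in the slab. -/
def Eevent (d k h : ℕ) (δ : ℝ) (m n : ℕ) (ξ : ℕ → Bool) : Set (Config d) :=
  if n = m then Set.univ else
    {ω | ∃ T : Set (Vtx d), T ⊆ lamBdry d k h n ∧
      8 * δ * ((lamBdry d k h n).ncard : ℝ) ≤ (T.ncard : ℝ) ∧
      ∀ y ∈ T, ∃ x ∈ lamBdry d k h (m + 1), ∃ t : ℕ,
        t ≤ (2 * k + 1) ^ d * n ∧ wordConnIn ω ξ 0 t (slabS d k h) x y}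


/-- Infinite pigeonhole: a sequence taking values in a finite set has a value
attained at arbitrarily large indices. -/
lemma pigeon {V : Type} {S : Set V} (hS : S.Finite) (f : ℕ → V) (hf : ∀ n, f n ∈ S) :
    ∃ v, ∀ N, ∃ M, N ≤ M ∧ f M = v := by
  by_contra hcon
  push_neg at hcon
  choose g hg using hcon
  set N0 := hS.toFinset.sup g with hN0
  exact hg (f N0) N0 (Finset.le_sup (hS.mem_toFinset.mpr (hf N0))) rfl

lemma adj_coord {d : ℕ} {u v : Vtx d} (h : adj u v) (i : Fin d) : |u i - v i| ≤ 1 := by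
  have h1 : (u i - v i) ^ 2 ≤ 1 := by
    calc (u i - v i) ^ 2 ≤ ∑ j, (u j - v j) ^ 2 :=
          Finset.single_le_sum (f := fun j => (u j - v j) ^ 2) (fun j _ => sq_nonneg _) (Finset.mem_univ i)
      _ = 1 := h
  nlinarith [abs_nonneg (u i - v i), sq_abs (u i - v i)]

lemma finite_of_bounded {d : ℕ} (c : Fin d → ℤ) (M : ℤ) :
    {x : Vtx d | ∀ i, |x i - c i| ≤ M}.Finite := by
  apply Set.Finite.subset (Set.Finite.pi (fun i : Fin d => Set.finite_Icc (c i - M) (c i + M)))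
  intro x hx
  rw [Set.mem_univ_pi]
  intro i
  have := abs_le.mp (hx i)
  exact Set.mem_Icc.mpr ⟨by linarith [this.1], by linarith [this.2]⟩

lemma lamBox_finite (d k h n : ℕ) : (lamBox d k h n).Finite := by
  apply (finite_of_bounded (fun _ => 0) ((k : ℤ) * n + h * k + k)).subset
  intro x hx
  intro i
  simp only [sub_zero]
  obtain ⟨hs, hb⟩ := hx
  have hs' := hs i
  have hn0 : (0 : ℤ) ≤ (k : ℤ) * n := by positivity
  have hh0 : (0 : ℤ) ≤ (h : ℤ) * k := by positivity
  have hk0 : (0 : ℤ) ≤ (k : ℤ) := by positivity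
  rcases Nat.lt_or_ge (i : ℕ) 2 with hi | hi
  · have := hb i (by omega)
    rw [abs_le] at this ⊢
    constructor <;> linarith [this.1, this.2]
  · rcases eq_or_lt_of_le hi with h2 | h3
    · obtain ⟨a, b⟩ := hs'.1 h2.symm
      rw [abs_le]; constructor <;> linarith
    · obtain ⟨a, b⟩ := hs'.2 (by omega)
      rw [abs_le]; constructor <;> linarith

lemma adjNbr_finite {d : ℕ} (x : Vtx d) : {y : Vtx d | adj x y}.Finite := by
  apply (finite_of_bounded x 1).subset
  intro y hy i
  have := adj_coord hy i
  rwa [abs_sub_comm]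

lemma adj_symm {d : ℕ} {x y : Vtx d} (h : adj x y) : adj y x := by
  unfold adj at h ⊢
  rw [← h]
  apply Finset.sum_congr rfl
  intro i _; ring

lemma bdry_nonempty (d k h n : ℕ) (hd : 3 ≤ d) (hk : 1 ≤ k) (hh : 2 ≤ h) (hn : 1 ≤ n) :
    (lamBdry d k h n).Nonempty := by
  have i0 : Fin d := ⟨0, by omega⟩
  have i2 : Fin d := ⟨2, by omega⟩
  set x : Vtx d := fun i => if i = (⟨0, by omega⟩ : Fin d) then ((k : ℤ) * n)
    else if i = (⟨2, by omega⟩ : Fin d) then 1 else 0 with hx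
  set y : Vtx d := fun i => if i = (⟨0, by omega⟩ : Fin d) then ((k : ℤ) * n + 1)
    else if i = (⟨2, by omega⟩ : Fin d) then 1 else 0 with hy
  have hk1 : (1 : ℤ) ≤ (k : ℤ) := by exact_mod_cast hk
  have hn1 : (1 : ℤ) ≤ (n : ℤ) := by exact_mod_cast hn
  have hh1 : (2 : ℤ) ≤ (h : ℤ) := by exact_mod_cast hh
  have hkn : (1 : ℤ) ≤ (k : ℤ) * n := by nlinarith
  have hhk : (1 : ℤ) ≤ (h : ℤ) * k := by nlinarith
  have hvals : ∀ z : Vtx d, (z = x ∨ z = y) → z ∈ slabS d k h := by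
    rintro z hz i
    have hzi : z i = x i ∨ z i = y i := by rcases hz with h | h <;> [left; right] <;> rw [h]
    constructor
    · intro h2
      have hne0 : i ≠ (⟨0, by omega⟩ : Fin d) := by
        intro hc; rw [hc] at h2; simp at h2
      have heq2 : i = (⟨2, by omega⟩ : Fin d) := Fin.ext h2
      rcases hzi with h | h <;> rw [h] <;> simp only [hx, hy, if_neg hne0, if_pos heq2] <;> constructor <;> nlinarith
    · intro h3
      have hne0 : i ≠ (⟨0, by omega⟩ : Fin d) := by
        intro hc; rw [hc] at h3; simp at h3
      have hne2 : i ≠ (⟨2, by omega⟩ : Fin d) := by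
        intro hc; rw [hc] at h3; simp at h3
      rcases hzi with h | h <;> rw [h] <;> simp only [hx, hy, if_neg hne0, if_neg hne2] <;> constructor <;> nlinarith
  refine ⟨x, ⟨⟨hvals x (Or.inl rfl), ?_⟩, y, ?_, hvals y (Or.inr rfl), ?_⟩⟩
  · intro i hi
    by_cases h0 : i = (⟨0, by omega⟩ : Fin d)
    · rw [hx]; simp [h0]
    · have hne2 : i ≠ (⟨2, by omega⟩ : Fin d) := by
        intro hc; rw [hc] at hi; simp at hi
      rw [hx]; simp [h0, hne2]; positivity
  · unfold adj
    have hterm : ∀ i : Fin d, (x i - y i) ^ 2 =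
        if i = (⟨0, by omega⟩ : Fin d) then 1 else 0 := by
      intro i
      by_cases h0 : i = (⟨0, by omega⟩ : Fin d)
      · rw [hx, hy]; simp [h0]
      · by_cases h2 : i = (⟨2, by omega⟩ : Fin d) <;> rw [hx, hy] <;> simp [h0, h2]
    rw [Finset.sum_congr rfl (fun i _ => hterm i)]
    simp
  · intro hc
    have := hc.2 (⟨0, by omega⟩ : Fin d) (by simp)
    rw [hy] at this
    simp at this
    rw [abs_of_nonneg (by linarith)] at this
    linarith

/-- An abstract König-type lemma. -/
lemma koenig {V : Type} (B : Set V) (hB : B.Finite) (nbr : V → Set V)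
    (hnbr : ∀ v, (nbr v).Finite) (Good : ℕ → (ℕ → V) → Prop)
    (hmono : ∀ {n N : ℕ} {γ}, n ≤ N → Good N γ → Good n γ)
    (hlocal : ∀ {n : ℕ} {γ γ' : ℕ → V}, (∀ i ≤ n, γ i = γ' i) → Good n γ → Good n γ')
    (hstart : ∀ {n : ℕ} {γ}, Good n γ → γ 0 ∈ B)
    (hstep : ∀ {n : ℕ} {γ}, Good n γ → ∀ i < n, γ (i + 1) ∈ nbr (γ i))
    (hex : ∀ N, ∃ γ, Good N γ) :
    ∃ Γ, ∀ n, Good n Γ := by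
  classical
  set Ext : ℕ → (ℕ → V) → Prop :=
    fun n γ => ∀ N, n ≤ N → ∃ γ', Good N γ' ∧ ∀ i ≤ n, γ' i = γ i with hExt
  have base : ∃ γ, Ext 0 γ := by
    choose g hg using hex
    obtain ⟨v, hv⟩ := pigeon hB (fun N => g N 0) (fun N => hstart (hg N))
    refine ⟨fun _ => v, fun N _ => ?_⟩
    obtain ⟨M, hM, hMv⟩ := hv N
    refine ⟨g M, hmono hM (hg M), ?_⟩
    intro i hi
    have : i = 0 := Nat.le_zero.mp hi
    subst this
    exact hMv
  have extend : ∀ n γ, Ext n γ → ∃ γ', Ext (n + 1) γ' ∧ ∀ i ≤ n, γ' i = γ i := by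
    intro n γ hγ
    choose g hg hag using fun N => hγ (N + (n + 1)) (by omega)
    have hmem : ∀ N, g N (n + 1) ∈ nbr (γ n) := by
      intro N
      have h1 := hstep (hg N) n (by omega)
      rwa [hag N n le_rfl] at h1
    obtain ⟨v, hv⟩ := pigeon (hnbr (γ n)) (fun N => g N (n + 1)) hmem
    refine ⟨Function.update γ (n + 1) v, ?_, ?_⟩
    · intro N hN
      obtain ⟨M, hM, hMv⟩ := hv N
      refine ⟨g M, hmono (show N ≤ M + (n + 1) by omega) (hg M), ?_⟩
      intro i hi
      rcases Nat.lt_or_ge i (n + 1) with hlt | hge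
      · rw [Function.update_of_ne (by omega), hag M i (by omega)]
      · have : i = n + 1 := by omega
        subst this
        rw [Function.update_self]
        exact hMv
    · intro i hi
      rw [Function.update_of_ne (by omega)]
  choose F hF1 hF2 using extend
  obtain ⟨γ0, hγ0⟩ := base
  let seq : ∀ n : ℕ, {γ : ℕ → V // Ext n γ} :=
    fun n => Nat.rec ⟨γ0, hγ0⟩ (fun n p => ⟨F n p.1 p.2, hF1 n p.1 p.2⟩) n
  let Γ : ℕ → V := fun i => (seq i).1 i
  have agree : ∀ n, ∀ i ≤ n, (seq n).1 i = Γ i := by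
    intro n
    induction n with
    | zero =>
      intro i hi
      have : i = 0 := Nat.le_zero.mp hi
      subst this; rfl
    | succ n ih =>
      intro i hi
      rcases Nat.lt_or_ge i (n + 1) with hlt | hge
      · have h1 : (seq (n + 1)).1 i = (seq n).1 i := hF2 n (seq n).1 (seq n).2 i (by omega)
        rw [h1, ih i (by omega)]
      · have : i = n + 1 := by omega
        subst this; rfl
  have ext_good : ∀ n γ, Ext n γ → Good n γ := by
    intro n γ hγ
    obtain ⟨γ', hγ', hag⟩ := hγ n le_rfl
    exact hlocal hag hγ'
  exact ⟨Γ, fun n => hlocal (agree n) (ext_good n _ (seq n).2)⟩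

/-- **Diagonal argument** : if the events `E_m^{2^j m}(ξ)` occur for all `j ≥ 0`, then
`ξ` is seen from some vertex of `∂Λ_{m+1}` within the slab `𝕊_h`. -/
theorem diagonal_argument
    (d : ℕ) (hd : 3 ≤ d) (ω : Config d) (ξ : ℕ → Bool)
    (k h m : ℕ) (hk : 1 ≤ k) (hh : 2 ≤ h) (hm : 1 ≤ m)
    (δ : ℝ) (hδ : 0 < δ)
    (hE : ∀ j : ℕ, ω ∈ Eevent d k h δ m (2 ^ j * m) ξ) :
    ∃ x ∈ lamBdry d k h (m + 1), seesWordIn ω ξ (slabS d k h) x := by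
  classical
  set B := lamBdry d k h (m + 1) with hBdef
  have hBfin : B.Finite := (lamBox_finite d k h (m + 1)).subset (fun x hx => hx.1)
  set Good : ℕ → (ℕ → Vtx d) → Prop := fun n γ =>
    γ 0 ∈ B ∧ (∀ i < n, adj (γ i) (γ (i + 1))) ∧
    (∀ i ≤ n, ∀ j ≤ n, γ i = γ j → i = j) ∧
    (∀ i ≤ n, γ i ∈ slabS d k h) ∧ (∀ i ≤ n, ω (γ i) = ξ i) with hGood
  have hex : ∀ N, ∃ γ, Good N γ := by
    intro N
    set j := N + m + 2 with hj
    have hEj := hE j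
    have h2j : 2 ≤ 2 ^ j := by
      calc 2 = 2 ^ 1 := rfl
        _ ≤ 2 ^ j := Nat.pow_le_pow_right (by norm_num) (by omega)
    have hne : 2 ^ j * m ≠ m := by
      have h2 : 2 * m ≤ 2 ^ j * m := Nat.mul_le_mul_right m h2j
      omega
    rw [Eevent, if_neg hne] at hEj
    obtain ⟨T, hTsub, hTcard, hTpath⟩ := hEj
    set n := 2 ^ j * m with hn
    have hn1 : 1 ≤ n := by
      have := Nat.one_le_two_pow (n := j)
      calc 1 ≤ 2 ^ j := this
        _ = 2 ^ j * 1 := (Nat.mul_one _).symm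
        _ ≤ 2 ^ j * m := Nat.mul_le_mul_left _ hm
    have hbne := bdry_nonempty d k h n hd hk hh hn1
    have hbfin : (lamBdry d k h n).Finite := (lamBox_finite d k h n).subset (fun x hx => hx.1)
    have hc : 0 < ((lamBdry d k h n).ncard : ℝ) := by
      exact_mod_cast (Set.ncard_pos hbfin).mpr hbne
    have hTne : T.Nonempty := by
      apply Set.nonempty_of_ncard_ne_zero
      intro h0
      rw [h0] at hTcard
      push_cast at hTcard
      nlinarith
    obtain ⟨y, hy⟩ := hTne
    obtain ⟨x, hx, t, ht, hconn⟩ := hTpath y hy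
    obtain ⟨-, γ, hγ0, hγt, hadjp, hinj, hslab, hword⟩ := hconn
    simp only [Nat.sub_zero] at hγt hadjp hinj hslab hword
    -- displacement bound
    have hdisp : ∀ i : Fin d, ∀ s ≤ t, |γ s i - γ 0 i| ≤ (s : ℤ) := by
      intro i s
      induction s with
      | zero => intro _; simp
      | succ s ih =>
        intro hs
        have h1 := ih (by omega)
        have h2 := adj_coord (hadjp s (by omega)) i
        rw [abs_sub_comm] at h2
        have h3 := abs_sub_le (γ (s + 1) i) (γ s i) (γ 0 i)
        push_cast
        linarith
    -- a coordinate of y is large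
    obtain ⟨hyB, z, hyz, hzS, hzN⟩ := hTsub hy
    have hzN' : ∃ i : Fin d, (i : ℕ) ≤ 1 ∧ (k : ℤ) * n < |z i| := by
      by_contra hco
      push_neg at hco
      exact hzN ⟨hzS, hco⟩
    obtain ⟨i, hi1, hzi⟩ := hzN'
    have hzy := adj_coord hyz i
    have hyi : (k : ℤ) * n ≤ |y i| := by
      have h4 := abs_sub_abs_le_abs_sub (z i) (y i)
      rw [abs_sub_comm] at hzy
      linarith
    -- x coordinate small
    have hxi : |x i| ≤ (k : ℤ) * (m + 1) := hx.1.2 i hi1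
    -- so t is large
    have htlow : (k : ℤ) * n - (k : ℤ) * (m + 1) ≤ (t : ℤ) := by
      have h5 := hdisp i t le_rfl
      rw [hγt, hγ0] at h5
      have h6 := abs_sub_abs_le_abs_sub (y i) (x i)
      linarith
    have hNt : N ≤ t := by
      have hpowZ : ((N : ℤ) + m + 3) ≤ (n : ℤ) := by
        have hjp : j + 1 ≤ 2 ^ j := Nat.lt_two_pow_self (n := j)
        have : N + m + 3 ≤ n := by
          calc N + m + 3 = j + 1 := by omega
            _ ≤ 2 ^ j := hjp
            _ = 2 ^ j * 1 := (Nat.mul_one _).symm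
            _ ≤ 2 ^ j * m := Nat.mul_le_mul_left _ hm
        exact_mod_cast this
      have hkZ : (1 : ℤ) ≤ (k : ℤ) := by exact_mod_cast hk
      have h1 : (k : ℤ) * ((N : ℤ) + m + 3) ≤ (k : ℤ) * n :=
        mul_le_mul_of_nonneg_left hpowZ (by positivity)
      have h2 : (0 : ℤ) ≤ ((k : ℤ) - 1) * N := mul_nonneg (by linarith) (by positivity)
      have : (N : ℤ) ≤ (t : ℤ) := by nlinarith
      exact_mod_cast this
    refine ⟨γ, ?_, ?_, ?_, ?_, ?_⟩
    · rw [hγ0]; exact hx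
    · intro i hi; exact hadjp i (by omega)
    · intro i hi j' hj' e; exact hinj i (by omega) j' (by omega) e
    · intro i hi; exact hslab i (by omega)
    · intro i hi
      have := hword i (by omega)
      simpa using this
  obtain ⟨Γ, hΓ⟩ := koenig B hBfin (fun v => {y | adj v y}) (fun v => adjNbr_finite v) Good
    (by
      intro n N γ hnN hg
      exact ⟨hg.1, fun i hi => hg.2.1 i (by omega),
        fun i hi j hj e => hg.2.2.1 i (by omega) j (by omega) e,
        fun i hi => hg.2.2.2.1 i (by omega), fun i hi => hg.2.2.2.2 i (by omega)⟩)
    (by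
      intro n γ γ' hag hg
      refine ⟨?_, ?_, ?_, ?_, ?_⟩
      · rw [← hag 0 (by omega)]; exact hg.1
      · intro i hi
        rw [← hag i (by omega), ← hag (i + 1) (by omega)]
        exact hg.2.1 i hi
      · intro i hi j hj e
        apply hg.2.2.1 i hi j hj
        rw [hag i hi, hag j hj]; exact e
      · intro i hi; rw [← hag i hi]; exact hg.2.2.2.1 i hi
      · intro i hi; rw [← hag i hi]; exact hg.2.2.2.2 i hi)
    (fun hg => hg.1)
    (fun hg i hi => hg.2.1 i hi)
    hex
  refine ⟨Γ 0, (hΓ 0).1, Γ, rfl, ?_, ?_, ?_, ?_⟩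
  · intro i j e
    have hg := hΓ (max i j)
    exact hg.2.2.1 i (le_max_left _ _) j (le_max_right _ _) e
  · intro i; exact (hΓ (i + 1)).2.1 i (by omega)
  · intro i; exact (hΓ i).2.2.2.1 i le_rfl
  · intro i; exact (hΓ i).2.2.2.2 i le_rfl

end PercWords
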